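/- The ring of Hahn series k[[t^Γ]] with coefficients in a field k and exponents in a linearly ordered abelian group Γ, equipped with the valuation sending a nonzero series to its minimal exponent, is spherically complete: every strictly nested family of closed valuation balls indexed by a well-ordered set has non-empty intersection. -/

import Mathlib

/-- Membership in the closed valuation ball `B(y, w)` in the Hahn series ring:
`x ∈ B(y, w)` iff the valuation of `x - y` (the minimal exponent, with the
convention `ν 0 = ⊤`) is at least `w`. -/
def hahnBall {k : Type*} [Field k] {Γ : Type*} [AddCommGroup Γ] [LinearOrder Γ] [IsOrderedAddMonoid Γ]
    (y : HahnSeries Γ k) (w : Γ) : Set (HahnSeries Γ k) :=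
  {x | (w : WithTop Γ) ≤ (x - y).orderTop}

private lemma le_orderTop_of_coeff {k : Type*} [Field k] {Γ : Type*}
    [AddCommGroup Γ] [LinearOrder Γ] [IsOrderedAddMonoid Γ] {x : HahnSeries Γ k} {w : Γ}
    (h : ∀ δ < w, x.coeff δ = 0) : (w : WithTop Γ) ≤ x.orderTop := by
  by_contra hc
  push_neg at hc
  lift x.orderTop to Γ using hc.ne_top with g hg
  exact HahnSeries.coeff_orderTop_ne hg.symm (h g (WithTop.coe_lt_coe.mp hc))

/-- The Hahn series ring `k[[t^Γ]]` is spherically complete: every strictly nested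
family of closed valuation balls indexed by a well-ordered set has non-empty
intersection. -/
theorem hahnSeries_spherically_complete
    {k : Type*} [Field k] {Γ : Type*} [AddCommGroup Γ] [LinearOrder Γ] [IsOrderedAddMonoid Γ]
    {T : Type*} [LinearOrder T] [WellFoundedLT T]
    (y : T → HahnSeries Γ k) (w : T → Γ)
    (hnested : ∀ τ τ' : T, τ < τ' → hahnBall (y τ') (w τ') ⊆ hahnBall (y τ) (w τ))
    (hstrict : ∀ τ τ' : T, τ < τ' → hahnBall (y τ') (w τ') ≠ hahnBall (y τ) (w τ)) :
    ∃ z : HahnSeries Γ k, ∀ τ : T, z ∈ hahnBall (y τ) (w τ) := by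
  classical
  -- consistency: any two balls' centers agree on coefficients below both radii
  have hcons : ∀ (τ τ' : T) (δ : Γ), δ < w τ → δ < w τ' →
      (y τ).coeff δ = (y τ').coeff δ := by
    have key : ∀ (τ τ' : T), τ < τ' → ∀ δ : Γ, δ < w τ →
        (y τ).coeff δ = (y τ').coeff δ := by
      intro τ τ' hlt δ hδ
      have hmem : y τ' ∈ hahnBall (y τ) (w τ) := by
        apply hnested τ τ' hlt
        simp [hahnBall, Set.mem_setOf_eq, HahnSeries.orderTop_zero]
      have : (y τ' - y τ).coeff δ = 0 :=
        HahnSeries.coeff_eq_zero_of_lt_orderTop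
          (lt_of_lt_of_le (WithTop.coe_lt_coe.mpr hδ) hmem)
      rw [HahnSeries.coeff_sub, sub_eq_zero] at this
      exact this.symm
    intro τ τ' δ h1 h2
    rcases lt_trichotomy τ τ' with h | h | h
    · exact key τ τ' h δ h1
    · rw [h]
    · exact (key τ' τ h δ h2).symm
  set f : Γ → k := fun δ => if h : ∃ τ, δ < w τ then (y h.choose).coeff δ else 0 with hf
  have hfspec : ∀ (δ : Γ) (τ : T), δ < w τ → f δ = (y τ).coeff δ := by
    intro δ τ hδ
    have h : ∃ τ, δ < w τ := ⟨τ, hδ⟩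
    simp only [hf, dif_pos h]
    exact hcons h.choose τ δ h.choose_spec hδ
  have hsupp : (Function.support f).IsPWO := by
    apply Set.IsWF.isPWO
    rw [Set.isWF_iff_no_descending_seq]
    intro g hg hmem
    have h0 : f (g 0) ≠ 0 := hmem 0
    have hex : ∃ τ, g 0 < w τ := by
      by_contra hh
      simp only [hf, dif_neg hh] at h0
      exact h0 rfl
    obtain ⟨τ, hτ⟩ := hex
    have hsub : ∀ n, g n ∈ (y τ).support := by
      intro n
      have hn : g n < w τ := lt_of_le_of_lt (hg.antitone (Nat.zero_le n)) hτ
      have h1 : f (g n) ≠ 0 := hmem n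
      rw [hfspec (g n) τ hn] at h1
      exact h1
    have := (y τ).isWF_support
    rw [Set.isWF_iff_no_descending_seq] at this
    exact this g hg hsub
  refine ⟨⟨f, hsupp⟩, fun τ => ?_⟩
  apply le_orderTop_of_coeff
  intro δ hδ
  rw [HahnSeries.coeff_sub]
  show f δ - (y τ).coeff δ = 0
  rw [hfspec δ τ hδ, sub_self]
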